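/- Fix a posterior likelihood function φ on the graph of information G = (V, E). There exists an F-measurable, strictly positive function f : V → ℝ such that φ(ω, ω') = f(ω)/f(ω') for every edge (ω, ω') ∈ E, if and only if φ satisfies internal consistency [INC] and its extension (well defined by the extension lemma) satisfies external consistency [EXC]. -/

import Mathlib

open Finset

/-- `ωs` (a sequence of `m+1` states) is a path of edges of `E`. -/
def IsPath {Ω : Type} (E : Ω → Ω → Prop) {m : ℕ} (ωs : Fin (m + 1) → Ω) : Prop :=
  ∀ i : Fin m, E (ωs i.castSucc) (ωs i.succ)

/-- The product of the values of `φ` along the edges of the path `ωs`. -/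
noncomputable def pathProd {Ω : Type} (φ : Ω → Ω → ℝ) {m : ℕ} (ωs : Fin (m + 1) → Ω) : ℝ :=
  ∏ i : Fin m, φ (ωs i.castSucc) (ωs i.succ)

/-- `ω ↠ ω'`: there is a finite path of edges of `E` from `ω` to `ω'`. -/
def Reach {Ω : Type} (E : Ω → Ω → Prop) (ω ω' : Ω) : Prop :=
  ∃ (m : ℕ) (ωs : Fin (m + 1) → Ω), IsPath E ωs ∧ ωs 0 = ω ∧ ωs (Fin.last m) = ω'

/-- Internal consistency [INC]: the product of `φ` along every F-cycle equals 1. -/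
def INCc {Ω : Type} (E F : Ω → Ω → Prop) (φ : Ω → Ω → ℝ) : Prop :=
  ∀ (m : ℕ) (ωs : Fin (m + 1) → Ω), IsPath E ωs → F (ωs 0) (ωs (Fin.last m)) →
    pathProd φ ωs = 1

/-- External consistency [EXC] (for the extension of `φ` along paths):
for every F-loop `((ω_i, ω̄_i))_i`, the product of the extended values
`φ(ω_i, ω̄_i)` — computed as the product of `φ` along any connecting paths —
equals 1. -/
def EXCc {Ω : Type} (E F : Ω → Ω → Prop) (φ : Ω → Ω → ℝ) : Prop :=
  ∀ (m : ℕ) (a b : Fin (m + 1) → Ω),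
    (∀ i, Reach E (a i) (b i)) →
    (∀ i, ¬ Reach E (b i) (a (i + 1))) →
    (∀ i, F (b i) (a (i + 1))) →
    ∀ (ms : Fin (m + 1) → ℕ) (p : ∀ i, Fin (ms i + 1) → Ω),
      (∀ i, IsPath E (p i)) → (∀ i, p i 0 = a i) → (∀ i, p i (Fin.last (ms i)) = b i) →
      (∏ i, pathProd φ (p i)) = 1


namespace Stmt1Aux

variable {Ω : Type}


/-- last vertex of walk starting at `a` through `l` -/
def lst (a : Ω) (l : List Ω) : Ω := l.getLastD a

@[simp] lemma lst_nil (a : Ω) : lst a ([] : List Ω) = a := rfl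
@[simp] lemma lst_cons (a b : Ω) (t : List Ω) : lst a (b :: t) = lst b t :=
  List.getLastD_cons
@[simp] lemma lst_singleton (a b : Ω) : lst a [b] = b := rfl

/-- product of weights along a walk -/
noncomputable def chProd (φ : Ω → Ω → ℝ) : Ω → List Ω → ℝ
  | _, [] => 1
  | a, b :: t => φ a b * chProd φ b t

@[simp] lemma chProd_nil (φ : Ω → Ω → ℝ) (a : Ω) : chProd φ a [] = 1 := rfl
@[simp] lemma chProd_cons (φ : Ω → Ω → ℝ) (a b : Ω) (t : List Ω) :
    chProd φ a (b :: t) = φ a b * chProd φ b t := rfl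

lemma lst_append (a : Ω) (l₁ l₂ : List Ω) : lst a (l₁ ++ l₂) = lst (lst a l₁) l₂ := by
  induction l₁ generalizing a with
  | nil => simp
  | cons b t ih => simp [ih]

lemma chain_append {R : Ω → Ω → Prop} {a : Ω} {l₁ l₂ : List Ω}
    (h₁ : List.Chain R a l₁) (h₂ : List.Chain R (lst a l₁) l₂) : List.Chain R a (l₁ ++ l₂) := by
  induction l₁ generalizing a with
  | nil => simpa using h₂
  | cons b t ih =>
    rw [List.Chain, List.chain_cons] at h₁
    exact List.chain_cons.mpr ⟨h₁.1, ih h₁.2 (by simpa using h₂)⟩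

lemma chProd_append (φ : Ω → Ω → ℝ) (a : Ω) (l₁ l₂ : List Ω) :
    chProd φ a (l₁ ++ l₂) = chProd φ a l₁ * chProd φ (lst a l₁) l₂ := by
  induction l₁ generalizing a with
  | nil => simp
  | cons b t ih => simp [ih b]; ring

/-- reversed walk tail -/
def revT : Ω → List Ω → List Ω
  | _, [] => []
  | a, b :: t => revT b t ++ [a]

lemma lst_revT (a : Ω) (l : List Ω) : lst (lst a l) (revT a l) = a := by
  induction l generalizing a with
  | nil => rfl
  | cons b t ih => simp [revT, lst_append]

lemma chain_revT {R : Ω → Ω → Prop} (hsym : ∀ x y, R x y → R y x) {a : Ω} {l : List Ω}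
    (h : List.Chain R a l) : List.Chain R (lst a l) (revT a l) := by
  induction l generalizing a with
  | nil => simp [revT]; exact List.Chain.nil
  | cons b t ih =>
    rw [List.Chain, List.chain_cons] at h
    simp only [lst_cons, revT]
    refine chain_append (ih h.2) ?_
    rw [lst_revT]
    exact List.chain_cons.mpr ⟨hsym _ _ h.1, List.Chain.nil⟩

lemma chProd_revT {R : Ω → Ω → Prop} (φ : Ω → Ω → ℝ)
    (hrec : ∀ x y, R x y → φ x y * φ y x = 1) {a : Ω} {l : List Ω}
    (h : List.Chain R a l) : chProd φ (lst a l) (revT a l) * chProd φ a l = 1 := by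
  induction l generalizing a with
  | nil => simp [revT]
  | cons b t ih =>
    rw [List.Chain, List.chain_cons] at h
    have h1 := ih h.2
    have h2 := hrec _ _ h.1
    simp only [revT, lst_cons, chProd_cons, chProd_append, lst_revT, chProd_nil]
    linear_combination (φ a b * φ b a) * h1 + h2

lemma chProd_pos {R : Ω → Ω → Prop} (φ : Ω → Ω → ℝ)
    (hpos : ∀ x y, R x y → 0 < φ x y) {a : Ω} {l : List Ω}
    (h : List.Chain R a l) : 0 < chProd φ a l := by
  induction l generalizing a with
  | nil => norm_num
  | cons b t ih =>
    rw [List.Chain, List.chain_cons] at h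
    exact mul_pos (hpos _ _ h.1) (ih h.2)



lemma isPath_zero {E : Ω → Ω → Prop} (ωs : Fin 1 → Ω) : IsPath E ωs :=
  fun i => i.elim0

@[simp] lemma pathProd_zero (φ : Ω → Ω → ℝ) (ωs : Fin 1 → Ω) : pathProd φ ωs = 1 := by
  simp [pathProd]

lemma isPath_succ_iff {E : Ω → Ω → Prop} {m : ℕ} (ωs : Fin (m + 1 + 1) → Ω) :
    IsPath E ωs ↔ E (ωs 0) (ωs 1) ∧ IsPath E (fun i => ωs i.succ) := by
  constructor
  · intro h
    refine ⟨h 0, fun i => ?_⟩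
    have := h i.succ
    simpa only [Fin.succ_castSucc] using this
  · rintro ⟨h0, h⟩ i
    induction i using Fin.cases with
    | zero => exact h0
    | succ j =>
      have := h j
      simpa only [Fin.succ_castSucc] using this

lemma pathProd_succ (φ : Ω → Ω → ℝ) {m : ℕ} (ωs : Fin (m + 1 + 1) → Ω) :
    pathProd φ ωs = φ (ωs 0) (ωs 1) * pathProd φ (fun i => ωs i.succ) := by
  rw [pathProd, Fin.prod_univ_succ]
  congr 1

-- list-chain → Fin-path
def toFin : (a : Ω) → (l : List Ω) → Fin (l.length + 1) → Ω
  | a, [], _ => a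
  | a, b :: t, i => Fin.cases a (toFin b t) i

@[simp] lemma toFin_zero (a : Ω) (l : List Ω) : toFin a l 0 = a := by
  cases l <;> rfl

@[simp] lemma toFin_succ (a b : Ω) (t : List Ω) (i : Fin (t.length + 1)) :
    toFin a (b :: t) i.succ = toFin b t i := by
  simp [toFin]

lemma toFin_last (a : Ω) (l : List Ω) :
    toFin a l (Fin.last l.length) = lst a l := by
  induction l generalizing a with
  | nil => rfl
  | cons b t ih =>
    have : (Fin.last (t.length + 1)) = (Fin.last t.length).succ := by
      simp [Fin.succ_last]
    rw [lst_cons, ← ih b]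
    show toFin a (b :: t) (Fin.last (t.length + 1)) = _
    rw [this, toFin_succ]

lemma isPath_toFin {E : Ω → Ω → Prop} {a : Ω} {l : List Ω} (h : List.Chain E a l) :
    IsPath E (toFin a l) := by
  induction l generalizing a with
  | nil => exact isPath_zero _
  | cons b t ih =>
    rw [List.Chain, List.chain_cons] at h
    rw [show (toFin a (b :: t) : Fin (t.length + 1 + 1) → Ω) = toFin a (b :: t) from rfl]
    rw [isPath_succ_iff]
    constructor
    · have h1 : (1 : Fin (t.length + 1 + 1)) = (0 : Fin (t.length + 1)).succ := rfl
      rw [toFin_zero, h1, toFin_succ, toFin_zero]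
      exact h.1
    · have : (fun i : Fin (t.length + 1) => toFin a (b :: t) i.succ) = toFin b t := by
        funext i; exact toFin_succ a b t i
      rw [this]
      exact ih h.2

lemma pathProd_toFin (φ : Ω → Ω → ℝ) (a : Ω) (l : List Ω) :
    pathProd φ (toFin a l) = chProd φ a l := by
  induction l generalizing a with
  | nil => simp
  | cons b t ih =>
    rw [pathProd_succ]
    have h1 : (1 : Fin (t.length + 1 + 1)) = (0 : Fin (t.length + 1)).succ := rfl
    have ht : (fun i : Fin (t.length + 1) => toFin a (b :: t) i.succ) = toFin b t := by
      funext i; exact toFin_succ a b t i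
    rw [toFin_zero, h1, toFin_succ, toFin_zero, ht, ih]
    rfl

-- Fin-path → list-chain (for Reach)
def Rch {Ω : Type} (R : Ω → Ω → Prop) (x y : Ω) : Prop :=
  ∃ l, List.Chain R x l ∧ lst x l = y

lemma rch_of_reach {E : Ω → Ω → Prop} {x y : Ω} (h : Reach E x y) : Rch E x y := by
  obtain ⟨m, ωs, hp, h0, hl⟩ := h
  subst h0 hl
  induction m with
  | zero => exact ⟨[], List.Chain.nil, rfl⟩
  | succ m ih =>
    rw [isPath_succ_iff] at hp
    obtain ⟨l, hc, hlst⟩ := ih (fun i => ωs i.succ) hp.2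
    refine ⟨ωs 1 :: l, List.chain_cons.mpr ⟨hp.1, hc⟩, ?_⟩
    rw [lst_cons]
    have h01 : (1 : Fin (m + 1 + 1)) = Fin.succ 0 := rfl
    rw [h01, hlst, Fin.succ_last]

lemma reach_of_rch {E : Ω → Ω → Prop} {x y : Ω} (h : Rch E x y) : Reach E x y := by
  obtain ⟨l, hc, hlst⟩ := h
  exact ⟨l.length, toFin x l, isPath_toFin hc, toFin_zero x l, by rw [toFin_last, hlst]⟩

-- telescoping along a Fin-path
lemma pathProd_eq_div {E : Ω → Ω → Prop} (φ : Ω → Ω → ℝ) (g : Ω → ℝ)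
    (hgpos : ∀ v, 0 < g v) (hg : ∀ x y, E x y → φ x y = g x / g y)
    {m : ℕ} {ωs : Fin (m + 1) → Ω} (h : IsPath E ωs) :
    pathProd φ ωs = g (ωs 0) / g (ωs (Fin.last m)) := by
  induction m with
  | zero =>
    have h0 : ωs (Fin.last 0) = ωs 0 := rfl
    rw [pathProd_zero, h0, div_self (hgpos _).ne']
  | succ m ih =>
    rw [isPath_succ_iff] at h
    rw [pathProd_succ, ih h.2, hg _ _ h.1]
    show _ = g (ωs 0) / g (ωs (Fin.last m).succ)
    rw [Fin.succ_last]
    have h1 : g (ωs 1) ≠ 0 := (hgpos _).ne'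
    field_simp
    rfl


section RchEquiv
variable {R : Ω → Ω → Prop}

lemma rch_refl (x : Ω) : Rch R x x := ⟨[], List.Chain.nil, rfl⟩

lemma rch_trans {x y z : Ω} (h₁ : Rch R x y) (h₂ : Rch R y z) : Rch R x z := by
  obtain ⟨l₁, hc₁, hl₁⟩ := h₁
  obtain ⟨l₂, hc₂, hl₂⟩ := h₂
  exact ⟨l₁ ++ l₂, chain_append hc₁ (hl₁ ▸ hc₂), by rw [lst_append, hl₁, hl₂]⟩

lemma rch_symm (hsym : ∀ x y, R x y → R y x) {x y : Ω} (h : Rch R x y) : Rch R y x := by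
  obtain ⟨l, hc, hl⟩ := h
  exact ⟨revT x l, hl ▸ chain_revT hsym hc, by rw [← hl, lst_revT]⟩

lemma rch_single {x y : Ω} (h : R x y) : Rch R x y :=
  ⟨[y], List.chain_cons.mpr ⟨h, List.Chain.nil⟩, rfl⟩

end RchEquiv

/-- Potential lemma: if every closed walk has weight-product 1, there is a positive
potential `g` with `chProd w a l = g a / g (lst a l)` for every walk. -/
lemma potential {V : Type} (R : V → V → Prop) (hsym : ∀ x y, R x y → R y x)
    (w : V → V → ℝ) (hpos : ∀ x y, R x y → 0 < w x y)
    (hrec : ∀ x y, R x y → w x y * w y x = 1)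
    (hcyc : ∀ (a : V) (l : List V), List.Chain R a l → lst a l = a → chProd w a l = 1) :
    ∃ g : V → ℝ, (∀ v, 0 < g v) ∧
      ∀ (a : V) (l : List V), List.Chain R a l → chProd w a l = g a / g (lst a l) := by
  -- well-definedness
  have wd : ∀ (x : V) (l₁ l₂ : List V), List.Chain R x l₁ → List.Chain R x l₂ →
      lst x l₁ = lst x l₂ → chProd w x l₁ = chProd w x l₂ := by
    intro x l₁ l₂ hc₁ hc₂ heq
    have hrev := chain_revT hsym hc₂
    have hcl : List.Chain R x (l₁ ++ revT x l₂) :=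
      chain_append hc₁ (heq ▸ hrev)
    have hlst : lst x (l₁ ++ revT x l₂) = x := by
      rw [lst_append, heq, lst_revT]
    have h1 := hcyc _ _ hcl hlst
    rw [chProd_append, heq] at h1
    have h2 := chProd_revT w hrec hc₂
    have p2 : 0 < chProd w x l₂ := chProd_pos w hpos hc₂
    have p1 : 0 < chProd w x l₁ := chProd_pos w hpos hc₁
    have hr : chProd w (lst x l₂) (revT x l₂) = (chProd w x l₂)⁻¹ := by
      field_simp at h2 ⊢
      linarith [h2]
    rw [hr] at h1
    field_simp at h1
    linarith [h1]
  letI s : Setoid V := ⟨Rch R, ⟨fun _ => rch_refl _, fun h => rch_symm hsym h,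
    fun h₁ h₂ => rch_trans h₁ h₂⟩⟩
  have hout : ∀ v : V, Rch R (Quotient.mk s v).out v := by
    intro v
    exact Quotient.exact (Quotient.out_eq (Quotient.mk s v))
  choose wl hwl hwlst using hout
  set G : V → ℝ := fun v => chProd w (Quotient.mk s v).out (wl v) with hG
  have Gpos : ∀ v, 0 < G v := fun v => chProd_pos w hpos (hwl v)
  refine ⟨fun v => (G v)⁻¹, fun v => inv_pos.mpr (Gpos v), ?_⟩
  intro a l hc
  set y := lst a l with hy
  have hrxy : Rch R a y := ⟨l, hc, rfl⟩
  have hq : (Quotient.mk s a) = (Quotient.mk s y) := Quotient.sound hrxy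
  -- walk from rep a to y via a
  have hG2 : chProd w (Quotient.mk s a).out (wl a ++ l) = G a * chProd w a l := by
    rw [chProd_append, hwlst]
  have hchain : List.Chain R (Quotient.mk s a).out (wl a ++ l) :=
    chain_append (hwl a) (by rw [hwlst]; exact hc)
  have hlst2 : lst (Quotient.mk s a).out (wl a ++ l) = y := by
    rw [lst_append, hwlst]
  have hGdef : ∀ v, G v = chProd w (Quotient.mk s v).out (wl v) := fun v => rfl
  have hGy : chProd w (Quotient.mk s a).out (wl a ++ l) = G y := by
    have h3 : List.Chain R (Quotient.mk s a).out (wl y) := by rw [hq]; exact hwl y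
    have h4 : lst (Quotient.mk s a).out (wl a ++ l) = lst (Quotient.mk s a).out (wl y) := by
      rw [hlst2, hq, hwlst]
    have h5 := wd _ _ _ hchain h3 h4
    rw [h5, hGdef y, hq]
  have : G a * chProd w a l = G y := by rw [← hG2, hGy]
  have ga := (Gpos a).ne'
  have gy := (Gpos y).ne'
  field_simp
  linear_combination this


end Stmt1Aux

open Stmt1Aux in
theorem stmt_1 {Ω : Type} [Fintype Ω] [Nonempty Ω] {n : ℕ} (hn : 2 ≤ n)
    (P : Fin n → Ω → Ω → Prop) (hP : ∀ i, Equivalence (P i))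
    (F : Ω → Ω → Prop) (hF : Equivalence F)
    (E : Ω → Ω → Prop) (hE : ∀ ω ω', E ω ω' ↔ ∃ i, P i ω ω')
    (φ : Ω → Ω → ℝ)
    (hpos : ∀ ω ω', E ω ω' → 0 < φ ω ω')
    (hrec : ∀ ω ω', E ω ω' → φ ω ω' = 1 / φ ω' ω) :
    (∃ f : Ω → ℝ, (∀ ω, 0 < f ω) ∧ (∀ ω ω', F ω ω' → f ω = f ω') ∧
      (∀ ω ω', E ω ω' → φ ω ω' = f ω / f ω')) ↔
    (INCc E F φ ∧ EXCc E F φ) := by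
  classical
  have hFrefl : ∀ ω, F ω ω := fun ω => hF.refl ω
  have hFsymm : ∀ {x y : Ω}, F x y → F y x := fun h => hF.symm h
  have hEsymm : ∀ x y : Ω, E x y → E y x := by
    intro x y h
    rw [hE] at h ⊢
    obtain ⟨i, hi⟩ := h
    exact ⟨i, (hP i).symm hi⟩
  have hφrec : ∀ x y : Ω, E x y → φ x y * φ y x = 1 := by
    intro x y h
    have h' := hEsymm x y h
    rw [hrec x y h, one_div, inv_mul_cancel₀ (hpos y x h').ne']
  constructor
  · rintro ⟨f, hfpos, hfF, hfE⟩
    constructor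
    · intro m ωs hp hF0
      rw [pathProd_eq_div φ f hfpos hfE hp, hfF _ _ hF0, div_self (hfpos _).ne']
    · intro m a b hab hnr hFba ms p hp hp0 hpl
      have hppi : ∀ i, pathProd φ (p i) = f (a i) / f (b i) := by
        intro i
        rw [pathProd_eq_div φ f hfpos hfE (hp i), hp0 i, hpl i]
      rw [Finset.prod_congr rfl (fun i _ => hppi i), Finset.prod_div_distrib]
      have hshift : ∏ i : Fin (m+1), f (b i) = ∏ i : Fin (m+1), f (a i) := by
        rw [Finset.prod_congr rfl (fun i _ => hfF _ _ (hFba i))]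
        exact Equiv.prod_comp (Equiv.addRight (1 : Fin (m+1))) (fun i => f (a i))
      rw [hshift, div_self (Finset.prod_pos (fun i _ => hfpos (a i))).ne']
  · rintro ⟨hinc, hexc⟩
    -- potential on (Ω, E, φ)
    have hcycE : ∀ (a : Ω) (l : List Ω), List.Chain E a l → lst a l = a →
        chProd φ a l = 1 := by
      intro a l hc hl
      have h := hinc l.length (toFin a l) (isPath_toFin hc)
        (by rw [toFin_zero, toFin_last, hl]; exact hFrefl a)
      rwa [pathProd_toFin] at h
    obtain ⟨g, hgpos, hgwalk⟩ := potential E hEsymm φ hpos hφrec hcycE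
    have hgedge : ∀ x y : Ω, E x y → φ x y = g x / g y := by
      intro x y h
      have h2 := hgwalk x [y] (List.chain_cons.mpr ⟨h, List.Chain.nil⟩)
      simpa using h2
    -- key consequence of EXC for cross-component F-pairs
    have key : ∀ u₁ v₁ u₂ v₂ : Ω, F u₁ v₁ → F u₂ v₂ → Rch E u₁ u₂ → Rch E v₁ v₂ →
        ¬ Rch E u₁ v₁ → g v₁ / g u₁ = g v₂ / g u₂ := by
      intro u₁ v₁ u₂ v₂ hf1 hf2 hu hv hnr
      have hr0 : Reach E v₁ v₂ := reach_of_rch hv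
      have hr1 : Reach E u₂ u₁ := reach_of_rch (rch_symm hEsymm hu)
      have hreach : ∀ i : Fin 2, Reach E (![v₁, u₂] i) (![v₂, u₁] i) := by
        intro i; fin_cases i
        · exact hr0
        · exact hr1
      have hnreach : ∀ i : Fin 2, ¬ Reach E (![v₂, u₁] i) (![v₁, u₂] (i + 1)) := by
        intro i; fin_cases i
        · -- ¬ Reach v₂ u₂
          intro hr
          exact hnr (rch_trans (rch_trans hu (rch_symm hEsymm (rch_of_reach hr)))
            (rch_symm hEsymm hv))
        · -- ¬ Reach u₁ v₁
          intro hr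
          exact hnr (rch_of_reach hr)
      have hFcond : ∀ i : Fin 2, F (![v₂, u₁] i) (![v₁, u₂] (i + 1)) := by
        intro i; fin_cases i
        · exact hFsymm hf2
        · exact hf1
      have hreach' := hreach
      choose ms ps hall using hreach'
      have h := hexc 1 ![v₁, u₂] ![v₂, u₁] hreach hnreach hFcond ms ps
        (fun i => (hall i).1) (fun i => (hall i).2.1) (fun i => (hall i).2.2)
      rw [Fin.prod_univ_two,
        pathProd_eq_div φ g hgpos hgedge (hall 0).1,
        pathProd_eq_div φ g hgpos hgedge (hall 1).1,
        (hall 0).2.1, (hall 0).2.2, (hall 1).2.1, (hall 1).2.2] at h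
      simp only [Matrix.cons_val_zero, Matrix.cons_val_one, Matrix.head_cons] at h
      -- h : g v₁ / g v₂ * (g u₂ / g u₁) = 1
      have p1 := (hgpos u₁).ne'
      have p2 := (hgpos u₂).ne'
      have p3 := (hgpos v₁).ne'
      have p4 := (hgpos v₂).ne'
      field_simp at h ⊢
      linear_combination h
    -- quotient by E-reachability
    letI s : Setoid Ω := ⟨Rch E, ⟨fun _ => rch_refl _, fun h => rch_symm hEsymm h,
      fun h₁ h₂ => rch_trans h₁ h₂⟩⟩
    set Hp : Quotient s → Quotient s → Prop := fun C C' => C ≠ C' ∧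
      ∃ uv : Ω × Ω, Quotient.mk s uv.1 = C ∧ Quotient.mk s uv.2 = C' ∧ F uv.1 uv.2
      with hHp
    have hwq : ∀ C C' : Quotient s, ∃ r : ℝ, 0 < r ∧ ∀ u v : Ω, Quotient.mk s u = C →
        Quotient.mk s v = C' → F u v → C ≠ C' → r = g v / g u := by
      intro C C'
      by_cases hex : ∃ uv : Ω × Ω, Quotient.mk s uv.1 = C ∧ Quotient.mk s uv.2 = C' ∧
          F uv.1 uv.2 ∧ C ≠ C'
      · obtain ⟨⟨u₀, v₀⟩, h1, h2, h3, h4⟩ := hex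
        refine ⟨g v₀ / g u₀, div_pos (hgpos _) (hgpos _), ?_⟩
        intro u v hu hv huv _
        exact key u₀ v₀ u v h3 huv (Quotient.exact (h1.trans hu.symm))
          (Quotient.exact (h2.trans hv.symm))
          (fun hr => h4 (by rw [← h1, ← h2]; exact Quotient.sound hr))
      · refine ⟨1, one_pos, ?_⟩
        intro u v hu hv huv hne
        exact absurd ⟨(u, v), hu, hv, huv, hne⟩ hex
    choose wq hwpos hwspec using hwq
    have wspec : ∀ C C', Hp C C' → ∀ u v : Ω, Quotient.mk s u = C →
        Quotient.mk s v = C' → F u v → wq C C' = g v / g u := by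
      intro C C' hcc u v hcu hcv huv
      exact hwspec C C' u v hcu hcv huv hcc.1
    have Hsymm : ∀ C C', Hp C C' → Hp C' C := by
      rintro C C' ⟨hne, ⟨uv, h1, h2, h3⟩⟩
      exact ⟨hne.symm, ⟨(uv.2, uv.1), h2, h1, hFsymm h3⟩⟩
    have wrec : ∀ C C', Hp C C' → wq C C' * wq C' C = 1 := by
      intro C C' h
      obtain ⟨hne, uv, h1, h2, h3⟩ := h
      rw [wspec C C' ⟨hne, uv, h1, h2, h3⟩ uv.1 uv.2 h1 h2 h3,
          wspec C' C (Hsymm _ _ ⟨hne, uv, h1, h2, h3⟩) uv.2 uv.1 h2 h1 (hFsymm h3)]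
      have p1 := (hgpos uv.1).ne'
      have p2 := (hgpos uv.2).ne'
      field_simp
    -- closed cycles in the quotient graph have product one, by EXC
    have hcycQ : ∀ (C : Quotient s) (L : List (Quotient s)), List.Chain Hp C L →
        lst C L = C → chProd wq C L = 1 := by
      intro C L hc hl
      cases L with
      | nil => rfl
      | cons C₁ T =>
        have hPathQ : IsPath Hp (toFin C (C₁ :: T)) := isPath_toFin hc
        have hlast : toFin C (C₁ :: T) (Fin.last (T.length + 1)) = toFin C (C₁ :: T) 0 := by
          rw [toFin_zero]
          rw [show (Fin.last (T.length + 1)) = Fin.last ((C₁ :: T).length) from rfl]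
          rw [toFin_last, hl]
        have hedge : ∀ i : Fin (T.length + 1),
            Hp (toFin C (C₁ :: T) i.castSucc) (toFin C (C₁ :: T) i.succ) := hPathQ
        have hpair : ∀ i : Fin (T.length + 1), ∃ uv : Ω × Ω,
            Quotient.mk s uv.1 = toFin C (C₁ :: T) i.castSucc ∧
            Quotient.mk s uv.2 = toFin C (C₁ :: T) i.succ ∧ F uv.1 uv.2 :=
          fun i => (hedge i).2
        choose uv hu hv hFuv using hpair
        have hwval : ∀ i, wq (toFin C (C₁ :: T) i.castSucc) (toFin C (C₁ :: T) i.succ)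
            = g (uv i).2 / g (uv i).1 :=
          fun i => wspec _ _ (hedge i) (uv i).1 (uv i).2 (hu i) (hv i) (hFuv i)
        have hcomp : ∀ i : Fin (T.length + 1),
            Quotient.mk s (uv i).2 = Quotient.mk s (uv (i + 1)).1 := by
          intro i
          rw [hv i, hu (i + 1)]
          by_cases hik : i = Fin.last T.length
          · subst hik
            rw [Fin.succ_last, Fin.last_add_one, Fin.castSucc_zero, hlast]
          · have hlt : i < Fin.last T.length := lt_of_le_of_ne (Fin.le_last i) hik
            have hcs : (i + 1 : Fin (T.length + 1)).castSucc = i.succ := by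
              ext
              simp [Fin.val_add_one_of_lt hlt]
            rw [hcs]
        have hreach : ∀ i : Fin (T.length + 1),
            Reach E ((fun j => (uv j).2) i) ((fun j => (uv (j + 1)).1) i) :=
          fun i => reach_of_rch (Quotient.exact (hcomp i))
        have hnreach : ∀ i : Fin (T.length + 1),
            ¬ Reach E ((fun j => (uv (j + 1)).1) i) ((fun j => (uv j).2) (i + 1)) := by
          intro i hr
          refine (hedge (i + 1)).1 ?_
          rw [← hu (i + 1), ← hv (i + 1)]
          exact Quotient.sound (rch_of_reach hr)
        have hFcond : ∀ i : Fin (T.length + 1),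
            F ((fun j => (uv (j + 1)).1) i) ((fun j => (uv j).2) (i + 1)) :=
          fun i => hFuv (i + 1)
        have hreach' := hreach
        choose ms ps hall using hreach'
        have hprod := hexc T.length (fun j => (uv j).2) (fun j => (uv (j + 1)).1)
          hreach hnreach hFcond ms ps
          (fun i => (hall i).1) (fun i => (hall i).2.1) (fun i => (hall i).2.2)
        have hpp : ∀ i, pathProd φ (ps i) = g (uv i).2 / g (uv (i + 1)).1 := by
          intro i
          rw [pathProd_eq_div φ g hgpos hgedge (hall i).1, (hall i).2.1, (hall i).2.2]
        rw [Finset.prod_congr rfl (fun i _ => hpp i), Finset.prod_div_distrib] at hprod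
        have hshift : ∏ i : Fin (T.length + 1), g (uv (i + 1)).1
            = ∏ i : Fin (T.length + 1), g (uv i).1 :=
          Equiv.prod_comp (Equiv.addRight (1 : Fin (T.length + 1))) (fun i => g (uv i).1)
        rw [hshift] at hprod
        have hcp : chProd wq C (C₁ :: T) = pathProd wq (toFin C (C₁ :: T)) :=
          (pathProd_toFin wq C (C₁ :: T)).symm
        rw [hcp]
        have hpe : pathProd wq (toFin C (C₁ :: T))
            = ∏ i : Fin (T.length + 1), (g (uv i).2 / g (uv i).1) :=
          Finset.prod_congr rfl (fun i _ => hwval i)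
        rw [hpe, Finset.prod_div_distrib]
        exact hprod
    obtain ⟨c, hcpos, hcwalk⟩ := potential Hp Hsymm wq (fun C C' _ => hwpos C C') wrec hcycQ
    have hcedge : ∀ C C', Hp C C' → wq C C' = c C / c C' := by
      intro C C' h
      have h2 := hcwalk C [C'] (List.chain_cons.mpr ⟨h, List.Chain.nil⟩)
      simpa using h2
    refine ⟨fun ω => c (Quotient.mk s ω) * g ω,
      fun ω => mul_pos (hcpos _) (hgpos _), ?_, ?_⟩
    · -- F-measurability
      intro ω ω' hFww
      show c (Quotient.mk s ω) * g ω = c (Quotient.mk s ω') * g ω'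
      by_cases hsame : Quotient.mk s ω = Quotient.mk s ω'
      · obtain ⟨l, hcl, hll⟩ := Quotient.exact hsame
        have h1 := hgwalk ω l hcl
        have h2 : chProd φ ω l = 1 := by
          have h3 := hinc l.length (toFin ω l) (isPath_toFin hcl)
            (by rw [toFin_zero, toFin_last, hll]; exact hFww)
          rwa [pathProd_toFin] at h3
        rw [h2, hll] at h1
        have hgg : g ω = g ω' := by
          rw [eq_comm, div_eq_one_iff_eq (hgpos ω').ne'] at h1
          exact h1
        rw [hsame, hgg]
      · have hHpe : Hp (Quotient.mk s ω) (Quotient.mk s ω') :=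
          ⟨hsame, ⟨(ω, ω'), rfl, rfl, hFww⟩⟩
        have h1 := hcedge _ _ hHpe
        have h2 := wspec _ _ hHpe ω ω' rfl rfl hFww
        rw [h1] at h2
        have h3 := (div_eq_div_iff (hcpos (Quotient.mk s ω')).ne' (hgpos ω).ne').mp h2
        linear_combination h3
    · -- edges
      intro ω ω' hEe
      show φ ω ω' = c (Quotient.mk s ω) * g ω / (c (Quotient.mk s ω') * g ω')
      have hsame : Quotient.mk s ω = Quotient.mk s ω' := Quotient.sound (rch_single hEe)
      rw [hsame, hgedge ω ω' hEe]
      exact (mul_div_mul_left _ _ (hcpos _).ne').symm
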